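/- In the affine Grassmann poset over F_q^n, fix a subspace u of dimension ℓ₃ and integers ℓ₁, ℓ₂ with ℓ₁ + ℓ₂ + ℓ₃ + 3 ≤ n. The probability that two independently uniformly chosen affine subspaces w₁ of dimension ℓ₁ and w₂ of dimension ℓ₂ satisfy dim(span(w₁, w₂, u)) = ℓ₁ + ℓ₂ + ℓ₃ + 2 is at least 1 − 2/q^{n−ℓ₁−ℓ₂−ℓ₃−1}. -/

import Mathlib

set_option maxHeartbeats 1600000

section AGaux1
set_option linter.unusedSectionVars false
open Module Submodule AffineSubspace
variable {F V : Type*} [Field F] [AddCommGroup V] [Module F V] [FiniteDimensional F V]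

theorem sup_nonempty' {w : AffineSubspace F V} (hw : (w : Set V).Nonempty) (v : AffineSubspace F V) :
    ((w ⊔ v : AffineSubspace F V) : Set V).Nonempty :=
  hw.mono (fun x hx => (le_sup_left : w ≤ w ⊔ v) hx)

theorem step_direction {w : AffineSubspace F V} {p0 : V} (hp0 : p0 ∈ w) (p : V) :
    (w ⊔ affineSpan F {p}).direction = w.direction ⊔ span F {p -ᵥ p0} := by
  rw [AffineSubspace.direction_sup hp0 (mem_affineSpan F (Set.mem_singleton _)),
    direction_affineSpan]
  simp

theorem finrank_span_singleton_le' (x : V) : finrank F ↥(span F {x}) ≤ 1 := by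
  rcases eq_or_ne x 0 with rfl | hx
  · rw [Submodule.span_zero_singleton]; simp
  · rw [finrank_span_singleton hx]

theorem finrank_sup_span_singleton' (K : Submodule F V) (x : V) (hx : x ∉ K) :
    finrank F ↥(K ⊔ span F {x}) = finrank F K + 1 := by
  have h := Submodule.finrank_sup_add_finrank_inf_eq K (span F {x})
  have h1 : finrank F ↥(span F {x}) = 1 := finrank_span_singleton (by rintro rfl; exact hx K.zero_mem)
  have h2 : K ⊓ span F {x} = ⊥ := by
    rw [eq_bot_iff]
    rintro y ⟨hyK, hyx⟩
    rw [SetLike.mem_coe, Submodule.mem_span_singleton] at hyx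
    obtain ⟨c, rfl⟩ := hyx
    rcases eq_or_ne c 0 with rfl|hc
    · simp
    · exact absurd (by simpa [hc] using K.smul_mem c⁻¹ hyK) hx
  rw [h1, h2, finrank_bot] at h
  omega

theorem step_dim_le {w : AffineSubspace F V} (hw : (w : Set V).Nonempty) (p : V) :
    finrank F (w ⊔ affineSpan F {p}).direction ≤ finrank F w.direction + 1 := by
  obtain ⟨p0, hp0⟩ := hw
  rw [step_direction hp0 p]
  have h := Submodule.finrank_sup_add_finrank_inf_eq w.direction (span F {p -ᵥ p0})
  have h1 : finrank F ↥(span F {p -ᵥ p0}) ≤ 1 := finrank_span_singleton_le' _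
  omega

theorem step_dim_eq {w : AffineSubspace F V} (hw : (w : Set V).Nonempty) {p : V} (hp : p ∉ w) :
    finrank F (w ⊔ affineSpan F {p}).direction = finrank F w.direction + 1 := by
  obtain ⟨p0, hp0⟩ := hw
  rw [step_direction hp0 p]
  refine finrank_sup_span_singleton' _ _ fun hmem => hp ?_
  simpa using AffineSubspace.vadd_mem_of_mem_direction hmem hp0

theorem Iio_succ_image (t : ℕ → V) (j : ℕ) :
    t '' Set.Iio (j + 1) = insert (t j) (t '' Set.Iio j) := by
  have h : Set.Iio (j + 1) = insert j (Set.Iio j) := by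
    ext i
    simp [Nat.lt_succ_iff, Nat.le_iff_lt_or_eq, or_comm]
  rw [h, Set.image_insert_eq]

theorem chain_succ (w : AffineSubspace F V) (t : ℕ → V) (j : ℕ) :
    w ⊔ affineSpan F (t '' Set.Iio (j + 1)) =
      (w ⊔ affineSpan F (t '' Set.Iio j)) ⊔ affineSpan F {t j} := by
  rw [Iio_succ_image, Set.insert_eq, AffineSubspace.span_union, sup_assoc]
  congr 1
  exact sup_comm _ _

theorem chain_zero (w : AffineSubspace F V) (t : ℕ → V) :
    w ⊔ affineSpan F (t '' Set.Iio 0) = w := by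
  have : Set.Iio 0 = (∅ : Set ℕ) := by ext i; simp
  rw [this, Set.image_empty, span_empty, sup_bot_eq]

theorem chain_dim_le {w : AffineSubspace F V} (hw : (w : Set V).Nonempty) (t : ℕ → V) (j : ℕ) :
    finrank F (w ⊔ affineSpan F (t '' Set.Iio j)).direction ≤ finrank F w.direction + j := by
  induction j with
  | zero => rw [chain_zero]; omega
  | succ j ih =>
    rw [chain_succ]
    have := step_dim_le (sup_nonempty' hw (affineSpan F (t '' Set.Iio j))) (t j)
    omega

theorem chain_dim_eq {w : AffineSubspace F V} (hw : (w : Set V).Nonempty) (t : ℕ → V) (j : ℕ)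
    (hgood : ∀ i < j, t i ∉ w ⊔ affineSpan F (t '' Set.Iio i)) :
    finrank F (w ⊔ affineSpan F (t '' Set.Iio j)).direction = finrank F w.direction + j := by
  induction j with
  | zero => rw [chain_zero]; omega
  | succ j ih =>
    rw [chain_succ, step_dim_eq (sup_nonempty' hw _) (hgood j (Nat.lt_succ_self j)),
      ih fun i hi => hgood i (hi.trans (Nat.lt_succ_self j))]
    omega
end AGaux1

section AGaux2
set_option linter.unusedSectionVars false
set_option maxHeartbeats 800000
open Module Submodule AffineSubspace
attribute [local instance] AffineSubspace.toAddTorsor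
variable {F V : Type*} [Field F] [AddCommGroup V] [Module F V] [FiniteDimensional F V]

theorem card_affineSubspace [Fintype F] [Finite V] {w : AffineSubspace F V}
    (hw : (w : Set V).Nonempty) :
    Nat.card ↥w = Fintype.card F ^ finrank F w.direction := by
  have : Nonempty ↥w := hw.to_subtype
  obtain ⟨p, hp⟩ := hw
  have e : ↥w.direction ≃ ↥w := Equiv.vaddConst (⟨p, hp⟩ : ↥w)
  cases nonempty_fintype V
  have : Fintype ↥w.direction := Fintype.ofFinite _
  rw [← Nat.card_congr e, Nat.card_eq_fintype_card, card_eq_pow_finrank (K := F)]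

theorem finrank_sup_le' (A B : Submodule F V) :
    finrank F ↥(A ⊔ B) ≤ finrank F A + finrank F B := by
  have h := Submodule.finrank_sup_add_finrank_inf_eq A B
  omega

theorem sup_dim_le {w1 w2 : AffineSubspace F V} (h1 : (w1 : Set V).Nonempty)
    (h2 : (w2 : Set V).Nonempty) :
    finrank F (w1 ⊔ w2).direction ≤
      finrank F w1.direction + finrank F w2.direction + 1 := by
  obtain ⟨p1, hp1⟩ := h1
  obtain ⟨p2, hp2⟩ := h2
  rw [AffineSubspace.direction_sup hp1 hp2]
  have ha := finrank_sup_le' (F := F) (w1.direction ⊔ w2.direction) (span F {p2 -ᵥ p1})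
  have hb := finrank_sup_le' (F := F) w1.direction w2.direction
  have hc : finrank F ↥(span F {p2 -ᵥ p1}) ≤ 1 := by
    rcases eq_or_ne (p2 -ᵥ p1) 0 with h | h
    · rw [h, Submodule.span_zero_singleton]; simp
    · rw [finrank_span_singleton h]
  omega

/-- span through subtype criterion -/
theorem span_coe_eq_iff {w : AffineSubspace F V} [Nonempty ↥w] {ι : Type*} (g : ι → ↥w) :
    affineSpan F (Set.range fun i => (g i : V)) = w ↔ affineSpan F (Set.range g) = ⊤ := by
  have hrange : (Set.range fun i => (g i : V)) = w.subtype '' Set.range g := by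
    ext x; simp [AffineSubspace.subtype_apply]
  rw [hrange, ← AffineSubspace.map_span]
  constructor
  · intro h
    rw [eq_top_iff]
    rintro x -
    have hx : (x : V) ∈ (affineSpan F (Set.range g)).map w.subtype := by rw [h]; exact x.2
    obtain ⟨y, hy, hyx⟩ := hx
    have : y = x := Subtype.ext hyx
    rwa [this] at hy
  · intro h
    rw [h]
    ext z
    simp only [AffineSubspace.mem_map, AffineSubspace.mem_top, true_and,
      AffineSubspace.subtype_apply]
    exact ⟨fun ⟨y, hy⟩ => hy ▸ y.2, fun hz => ⟨⟨z, hz⟩, rfl⟩⟩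

theorem span_image_equiv_top_iff {P₁ P₂ : Type*} [AddCommGroup P₁]
    : True := trivial

theorem span_range_equiv_comp_eq_top_iff {V₁ P₁ V₂ P₂ : Type*} [AddCommGroup V₁] [Module F V₁]
    [AddCommGroup V₂] [Module F V₂] [AddTorsor V₁ P₁] [AddTorsor V₂ P₂]
    (e : P₁ ≃ᵃ[F] P₂) {ι : Type*} (g : ι → P₁) :
    affineSpan F (Set.range (fun i => e (g i))) = ⊤ ↔ affineSpan F (Set.range g) = ⊤ := by
  have h1 : Set.range (fun i => e (g i)) = ⇑e '' Set.range g := by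
    ext x; simp
  rw [h1]
  constructor
  · intro h
    have h3 := AffineSubspace.comap_span (e : P₁ ≃ᵃ[F] P₂) (⇑e '' Set.range g)
    rw [h, Set.preimage_image_eq _ e.injective, AffineSubspace.comap_top] at h3
    exact h3.symm
  · intro h
    exact AffineMap.span_eq_top_of_surjective e.toAffineMap e.surjective h

/-- The set of spanning tuples of length `l+1` for a nonempty subspace of dimension `l`. -/
theorem card_spanning_tuples_eq {l : ℕ} {w w' : AffineSubspace F V}
    (hw : (w : Set V).Nonempty) (hw' : (w' : Set V).Nonempty)
    (hd : finrank F w.direction = finrank F w'.direction) :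
    Nat.card {a : Fin (l + 1) → V // affineSpan F (Set.range a) = w} =
      Nat.card {a : Fin (l + 1) → V // affineSpan F (Set.range a) = w'} := by
  have hne : Nonempty ↥w := hw.to_subtype
  have hne' : Nonempty ↥w' := hw'.to_subtype
  -- affine equivalence between w and w'
  have L : ↥w.direction ≃ₗ[F] ↥w'.direction := LinearEquiv.ofFinrankEq _ _ hd
  obtain ⟨p, hp⟩ := hw
  obtain ⟨p', hp'⟩ := hw'
  let e : ↥w ≃ᵃ[F] ↥w' :=
    AffineEquiv.mk' (fun x => L (x -ᵥ ⟨p, hp⟩) +ᵥ (⟨p', hp'⟩ : ↥w')) L ⟨p, hp⟩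
      (fun x => by simp)
  -- reduce to top-span tuples inside each subspace
  have key : ∀ (u₁ : AffineSubspace F V) (h₁ : Nonempty ↥u₁),
      Nat.card {a : Fin (l + 1) → V // affineSpan F (Set.range a) = u₁} =
        Nat.card {g : Fin (l + 1) → ↥u₁ // affineSpan F (Set.range g) = ⊤} := by
    intro u₁ h₁
    refine Nat.card_congr ?_
    refine
      { toFun := fun a => ⟨fun i => ⟨a.1 i, by
            have hmem := subset_affineSpan F (Set.range a.1) (Set.mem_range_self i)
            rwa [a.2] at hmem⟩,
          (span_coe_eq_iff _).1 (by exact a.2)⟩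
        invFun := fun g => ⟨fun i => (g.1 i : V), (span_coe_eq_iff g.1).2 g.2⟩
        left_inv := fun a => Subtype.ext rfl
        right_inv := fun g => Subtype.ext (funext fun i => Subtype.ext rfl) }
  rw [key w hne, key w' hne']
  refine Nat.card_congr ?_
  exact
    { toFun := fun g => ⟨fun i => e (g.1 i), (span_range_equiv_comp_eq_top_iff e g.1).2 g.2⟩
      invFun := fun g => ⟨fun i => e.symm (g.1 i),
        (span_range_equiv_comp_eq_top_iff e.symm g.1).2 g.2⟩
      left_inv := fun g => Subtype.ext (funext fun i => by simp)
      right_inv := fun g => Subtype.ext (funext fun i => by simp) }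

theorem exists_spanning_tuple {l : ℕ} {w : AffineSubspace F V}
    (hw : (w : Set V).Nonempty) (hd : finrank F w.direction = l) :
    Nonempty {a : Fin (l + 1) → V // affineSpan F (Set.range a) = w} := by
  have hne : Nonempty ↥w := hw.to_subtype
  obtain ⟨b⟩ := AffineBasis.exists_affineBasis_of_finiteDimensional
    (ι := Fin (l + 1)) (k := F) (V := ↥w.direction) (P := ↥w)
    (by rw [Fintype.card_fin, hd])
  exact ⟨⟨fun i => (b i : V), (span_coe_eq_iff b).2 b.tot⟩⟩
end AGaux2

section AGaux3
open Finset

theorem natCard_sigma {ι : Type*} [Fintype ι] (f : ι → Type*) [∀ i, Finite (f i)] :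
    Nat.card (Σ i, f i) = ∑ i, Nat.card (f i) := by
  have : ∀ i, Fintype (f i) := fun i => Fintype.ofFinite _
  simp [Nat.card_eq_fintype_card, Fintype.card_sigma]

theorem natCard_fiber_sum {α β : Type*} [Finite α] (f : α → β) (P : β → Prop) (c : ℕ)
    [Fintype {b : β // P b}]
    (h : ∀ b, P b → Nat.card {a // f a = b} = c) :
    Nat.card {a // P (f a)} = Nat.card {b // P b} * c := by
  classical
  have e : {a // P (f a)} ≃ Σ b : {b // P b}, {a // f a = b.1} :=
    { toFun := fun a => ⟨⟨f a.1, a.2⟩, ⟨a.1, rfl⟩⟩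
      invFun := fun x => ⟨x.2.1, by rw [x.2.2]; exact x.1.2⟩
      left_inv := fun a => rfl
      right_inv := fun x => by
        obtain ⟨⟨b, hb⟩, a, ha⟩ := x
        dsimp only at ha ⊢
        subst ha
        rfl }
  rw [Nat.card_congr e, natCard_sigma]
  rw [Finset.sum_congr rfl fun b _ => h b.1 b.2, Finset.sum_const, Finset.card_univ,
    Nat.card_eq_fintype_card, smul_eq_mul]

theorem natCard_subtype_mono {α : Type*} [Finite α] (P Q : α → Prop) (h : ∀ a, P a → Q a) :
    Nat.card {a // P a} ≤ Nat.card {a // Q a} :=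
  Nat.card_le_card_of_injective (fun x => ⟨x.1, h _ x.2⟩)
    (fun x y hxy => Subtype.ext (congrArg (fun z : {a // Q a} => z.1) hxy))

theorem natCard_compl {α : Type*} [Finite α] (P : α → Prop) :
    Nat.card {a // P a} + Nat.card {a // ¬ P a} = Nat.card α := by
  classical
  have : Fintype α := Fintype.ofFinite _
  simp only [Nat.card_eq_fintype_card]
  have h1 := Fintype.card_subtype_compl P
  have h2 := Fintype.card_subtype_le P
  omega

theorem natCard_exists_lt_le {α : Type*} [Finite α] (m : ℕ) (E : ℕ → α → Prop) :
    Nat.card {a // ∃ j < m, E j a} ≤ ∑ j ∈ Finset.range m, Nat.card {a // E j a} := by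
  classical
  have hinj : Function.Injective
      (fun a : {a // ∃ j < m, E j a} =>
        (⟨⟨Nat.find a.2, (Nat.find_spec a.2).1⟩,
          ⟨a.1, (Nat.find_spec a.2).2⟩⟩ : Σ j : Fin m, {a // E j.1 a})) := by
    intro a b hab
    have := congrArg (fun x : Σ j : Fin m, {a : α // E j.1 a} => (x.2.1 : α)) hab
    exact Subtype.ext this
  calc Nat.card {a // ∃ j < m, E j a}
      ≤ Nat.card (Σ j : Fin m, {a // E j.1 a}) := Nat.card_le_card_of_injective _ hinj
    _ = ∑ j : Fin m, Nat.card {a // E j.1 a} := natCard_sigma _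
    _ = ∑ j ∈ Finset.range m, Nat.card {a // E j a} := by
        rw [Finset.sum_range fun j => Nat.card {a // E j a}]

theorem natCard_pinned_le {ι V : Type*} [Fintype ι] [DecidableEq ι] [Finite V]
    (j : ι) (W : ({i : ι // i ≠ j} → V) → Set V) (B : ℕ)
    (hW : ∀ g, Nat.card (W g) ≤ B) :
    Nat.card {f : ι → V // f j ∈ W (fun i => f i.1)} ≤
      B * Nat.card ({i : ι // i ≠ j} → V) := by
  classical
  have : Fintype V := Fintype.ofFinite _
  have hinj : Function.Injective
      (fun f : {f : ι → V // f j ∈ W (fun i => f i.1)} =>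
        (⟨fun i => f.1 i.1, ⟨f.1 j, f.2⟩⟩ : Σ g : ({i : ι // i ≠ j} → V), (W g : Set V))) := by
    intro a b hab
    have h1 := congrArg Sigma.fst hab
    have h2 := congrArg (fun x : Σ g : ({i : ι // i ≠ j} → V), (W g : Set V) => (x.2 : V)) hab
    refine Subtype.ext (funext fun i => ?_)
    by_cases h : i = j
    · subst h; exact h2
    · exact congrFun h1 ⟨i, h⟩
  calc Nat.card {f : ι → V // f j ∈ W (fun i => f i.1)}
      ≤ Nat.card (Σ g : ({i : ι // i ≠ j} → V), (W g : Set V)) :=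
        Nat.card_le_card_of_injective _ hinj
    _ = ∑ g : ({i : ι // i ≠ j} → V), Nat.card (W g) := natCard_sigma _
    _ ≤ ∑ _g : ({i : ι // i ≠ j} → V), B :=
        Finset.sum_le_sum fun g _ => hW g
    _ = B * Nat.card ({i : ι // i ≠ j} → V) := by
        rw [Finset.sum_const, Finset.card_univ, Nat.card_eq_fintype_card, smul_eq_mul,
          mul_comm]
end AGaux3

section AGaux4
set_option linter.unusedVariables false
open Module Submodule AffineSubspace

variable {l1 l2 : ℕ} {V : Type*} [AddCommGroup V]

/-- sequence of points of a pair of tuples -/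
def agST (l1 l2 : ℕ) {V : Type*} [AddCommGroup V]
    (f : Fin (l1 + 1) ⊕ Fin (l2 + 1) → V) : ℕ → V :=
  fun i => if h : i < l1 + 1 + (l2 + 1) then f (finSumFinEquiv.symm ⟨i, h⟩) else 0

theorem agST_lt (f : Fin (l1 + 1) ⊕ Fin (l2 + 1) → V) {i : ℕ} (h : i < l1 + 1 + (l2 + 1)) :
    agST l1 l2 f i = f (finSumFinEquiv.symm ⟨i, h⟩) := dif_pos h

theorem agST_idx_left (f : Fin (l1 + 1) ⊕ Fin (l2 + 1) → V) {i : ℕ} (h : i < l1 + 1) :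
    agST l1 l2 f i = f (Sum.inl ⟨i, h⟩) := by
  have hm : i < l1 + 1 + (l2 + 1) := by omega
  rw [agST_lt f hm]
  congr 1
  have : (⟨i, hm⟩ : Fin (l1 + 1 + (l2 + 1))) = Fin.castAdd (l2 + 1) ⟨i, h⟩ := rfl
  rw [this, finSumFinEquiv_symm_apply_castAdd]

theorem agST_idx_right (f : Fin (l1 + 1) ⊕ Fin (l2 + 1) → V) {i : ℕ}
    (h1 : l1 + 1 ≤ i) (h2 : i < l1 + 1 + (l2 + 1)) :
    agST l1 l2 f i = f (Sum.inr ⟨i - (l1 + 1), by omega⟩) := by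
  rw [agST_lt f h2]
  congr 1
  have : (⟨i, h2⟩ : Fin (l1 + 1 + (l2 + 1))) =
      Fin.natAdd (l1 + 1) ⟨i - (l1 + 1), by omega⟩ := by
    apply Fin.ext
    simp [Fin.natAdd]
    omega
  rw [this, finSumFinEquiv_symm_apply_natAdd]

theorem agST_image_first (f : Fin (l1 + 1) ⊕ Fin (l2 + 1) → V) :
    agST l1 l2 f '' Set.Iio (l1 + 1) = Set.range (f ∘ Sum.inl) := by
  ext x
  constructor
  · rintro ⟨i, hi, rfl⟩
    exact ⟨⟨i, hi⟩, (agST_idx_left f hi).symm⟩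
  · rintro ⟨a, rfl⟩
    exact ⟨a.1, a.2, agST_idx_left f a.2⟩

theorem agST_image_all (f : Fin (l1 + 1) ⊕ Fin (l2 + 1) → V) :
    agST l1 l2 f '' Set.Iio (l1 + 1 + (l2 + 1)) =
      Set.range (f ∘ Sum.inl) ∪ Set.range (f ∘ Sum.inr) := by
  ext x
  constructor
  · rintro ⟨i, hi, rfl⟩
    rw [Set.mem_Iio] at hi
    rcases lt_or_ge i (l1 + 1) with h | h
    · exact Or.inl ⟨⟨i, h⟩, (agST_idx_left f h).symm⟩
    · have hlt : i - (l1 + 1) < l2 + 1 := by omega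
      exact Or.inr ⟨⟨i - (l1 + 1), hlt⟩, (agST_idx_right f h hi).symm⟩
  · rintro (⟨a, rfl⟩ | ⟨a, rfl⟩)
    · exact ⟨a.1, Set.mem_Iio.mpr (by have := a.2; omega), agST_idx_left f a.2⟩
    · have ha := a.2
      refine ⟨l1 + 1 + a.1, Set.mem_Iio.mpr (by omega), ?_⟩
      rw [agST_idx_right f (by omega) (by omega)]
      exact congrArg f (congrArg Sum.inr (Fin.ext (by simp)))
end AGaux4


section AGmain
open Module Submodule AffineSubspace Finset

theorem ag_geom_le {q : ℕ} (hq : 2 ≤ q) (k : ℕ) :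
    ∑ j ∈ Finset.range (k + 1), q ^ j ≤ 2 * q ^ k := by
  induction k with
  | zero => simp
  | succ k ih =>
    rw [Finset.sum_range_succ]
    have h1 : 2 * q ^ k ≤ q ^ (k + 1) := by
      rw [pow_succ, mul_comm]
      exact Nat.mul_le_mul_left _ hq
    omega

theorem ag_main_aux (F V : Type*) [Field F] [Fintype F] [AddCommGroup V] [Module F V]
    [Finite V] (n l1 l2 l3 : ℕ) (hn : l1 + l2 + l3 + 3 ≤ n)
    (hcard : Nat.card V = Fintype.card F ^ n)
    (u : AffineSubspace F V) (hu : (u : Set V).Nonempty)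
    (hud : Module.finrank F u.direction = l3) :
    (1 - 2 / (Fintype.card F : ℝ) ^ (n - l1 - l2 - l3 - 1)) *
        (Nat.card {p : AffineSubspace F V × AffineSubspace F V //
          ((p.1 : Set V).Nonempty ∧ Module.finrank F p.1.direction = l1) ∧
          ((p.2 : Set V).Nonempty ∧ Module.finrank F p.2.direction = l2)} : ℝ) ≤
      (Nat.card {p : AffineSubspace F V × AffineSubspace F V //
          (((p.1 : Set V).Nonempty ∧ Module.finrank F p.1.direction = l1) ∧
           ((p.2 : Set V).Nonempty ∧ Module.finrank F p.2.direction = l2)) ∧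
          Module.finrank F
            (affineSpan F ((p.1 : Set V) ∪ (p.2 : Set V) ∪
              (u : Set V))).direction = l1 + l2 + l3 + 2} : ℝ) := by
  classical
  have hFD : FiniteDimensional F V := Module.Finite.of_finite
  have finAS : Finite (AffineSubspace F V) :=
    Finite.of_injective (fun s => (s : Set V)) SetLike.coe_injective
  cases nonempty_fintype V
  set q := Fintype.card F with hqdef
  have hq2 : 2 ≤ q := Fintype.one_lt_card
  set e := n - l1 - l2 - l3 - 1 with hedef
  set m := l1 + 1 + (l2 + 1) with hmdef
  have he2 : 2 ≤ e := by omega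
  have hem : e + (l3 + (m - 1) + n * (m - 1)) = n * m := by
    have hnm : n * m = n * (m - 1) + n := by
      have h : m = (m - 1) + 1 := by omega
      calc n * m = n * ((m - 1) + 1) := by rw [← h]
        _ = n * (m - 1) + n := by ring
    omega
  let T := (Fin (l1 + 1) ⊕ Fin (l2 + 1)) → V
  have cardT : Nat.card T = q ^ (n * m) := by
    have h1 : Nat.card T = Fintype.card V ^ Fintype.card (Fin (l1 + 1) ⊕ Fin (l2 + 1)) := by
      rw [Nat.card_eq_fintype_card, Fintype.card_fun]
    rw [h1, ← Nat.card_eq_fintype_card, hcard, Fintype.card_sum, Fintype.card_fin,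
      Fintype.card_fin, ← pow_mul]
  let Φ : T → AffineSubspace F V × AffineSubspace F V := fun f =>
    (affineSpan F (Set.range (f ∘ Sum.inl)), affineSpan F (Set.range (f ∘ Sum.inr)))
  let Valid : AffineSubspace F V × AffineSubspace F V → Prop := fun p =>
    ((p.1 : Set V).Nonempty ∧ Module.finrank F p.1.direction = l1) ∧
    ((p.2 : Set V).Nonempty ∧ Module.finrank F p.2.direction = l2)
  let GoodP : AffineSubspace F V × AffineSubspace F V → Prop := fun p =>
    Valid p ∧ Module.finrank F
      (affineSpan F ((p.1 : Set V) ∪ (p.2 : Set V) ∪ (u : Set V))).direction = l1 + l2 + l3 + 2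
  let E : ℕ → T → Prop := fun j f =>
    agST l1 l2 f j ∈ u ⊔ affineSpan F (agST l1 l2 f '' Set.Iio j)
  let Good : T → Prop := fun f => ∀ j < m, ¬ E j f
  show (1 - 2 / (q : ℝ) ^ e) * (Nat.card {p // Valid p} : ℝ) ≤
    (Nat.card {p // GoodP p} : ℝ)
  -- Claim A: good tuples give good pairs
  have claimA : ∀ f : T, Good f → GoodP (Φ f) := by
    intro f hf
    set A := affineSpan F (Set.range (f ∘ Sum.inl)) with hA
    set B := affineSpan F (Set.range (f ∘ Sum.inr)) with hB
    have hAne : (A : Set V).Nonempty := (affineSpan_nonempty F).2 (Set.range_nonempty _)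
    have hBne : (B : Set V).Nonempty := (affineSpan_nonempty F).2 (Set.range_nonempty _)
    have h1 : Module.finrank F (u ⊔ affineSpan F
        (agST l1 l2 f '' Set.Iio (l1 + 1))).direction = l3 + (l1 + 1) := by
      rw [chain_dim_eq hu _ _ (fun i hi => hf i (by omega)), hud]
    rw [agST_image_first] at h1
    have h2 : Module.finrank F (u ⊔ affineSpan F
        (agST l1 l2 f '' Set.Iio (l1 + 1 + (l2 + 1)))).direction = l3 + (l1 + 1 + (l2 + 1)) := by
      rw [chain_dim_eq hu _ _ (fun i hi => hf i (by omega)), hud]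
    rw [agST_image_all, AffineSubspace.span_union, ← hA, ← hB, (sup_assoc u A B).symm] at h2
    have h3 : Module.finrank F A.direction ≤ l1 := by
      rw [hA, direction_affineSpan]
      exact finrank_vectorSpan_range_le F (f ∘ Sum.inl) (Fintype.card_fin _)
    have h4 : Module.finrank F B.direction ≤ l2 := by
      rw [hB, direction_affineSpan]
      exact finrank_vectorSpan_range_le F (f ∘ Sum.inr) (Fintype.card_fin _)
    have h5 := sup_dim_le hu hAne
    rw [hud] at h5
    have h6 := sup_dim_le (sup_nonempty' hu A) hBne
    have hA1 : Module.finrank F A.direction = l1 := by omega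
    have hB1 : Module.finrank F B.direction = l2 := by omega
    refine ⟨⟨⟨hAne, hA1⟩, ⟨hBne, hB1⟩⟩, ?_⟩
    have hspan : affineSpan F ((A : Set V) ∪ (B : Set V) ∪ (u : Set V)) = (u ⊔ A) ⊔ B := by
      rw [AffineSubspace.span_union, AffineSubspace.span_union, affineSpan_coe,
        affineSpan_coe, affineSpan_coe, sup_comm (A ⊔ B) u, (sup_assoc u A B).symm]
    show Module.finrank F (affineSpan F ((A : Set V) ∪ (B : Set V) ∪ (u : Set V))).direction
      = l1 + l2 + l3 + 2
    rw [hspan, h2]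
    omega
  -- per-event counting
  have hEj : ∀ j, j < m → Nat.card {f : T // E j f} ≤ q ^ (l3 + j) * q ^ (n * (m - 1)) := by
    intro j hj
    have hjm : j < l1 + 1 + (l2 + 1) := by omega
    set jidx := finSumFinEquiv.symm (⟨j, hjm⟩ : Fin (l1 + 1 + (l2 + 1))) with hjidx
    set stP : ({i : Fin (l1 + 1) ⊕ Fin (l2 + 1) // i ≠ jidx} → V) → ℕ → V := fun g i =>
      if h : i < l1 + 1 + (l2 + 1) then
        (if hne : finSumFinEquiv.symm (⟨i, h⟩ : Fin (l1 + 1 + (l2 + 1))) = jidx then 0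
         else g ⟨finSumFinEquiv.symm (⟨i, h⟩ : Fin (l1 + 1 + (l2 + 1))), hne⟩)
      else 0 with hstP
    set W : ({i : Fin (l1 + 1) ⊕ Fin (l2 + 1) // i ≠ jidx} → V) → Set V := fun g =>
      ((u ⊔ affineSpan F (stP g '' Set.Iio j) : AffineSubspace F V) : Set V) with hW
    have hWcard : ∀ g, Nat.card (W g) ≤ q ^ (l3 + j) := by
      intro g
      have hne : ((u ⊔ affineSpan F (stP g '' Set.Iio j) : AffineSubspace F V) : Set V).Nonempty :=
        sup_nonempty' hu _
      have hrank := chain_dim_le hu (stP g) j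
      rw [hud] at hrank
      have hcardW : Nat.card (W g) =
          q ^ Module.finrank F (u ⊔ affineSpan F (stP g '' Set.Iio j)).direction :=
        card_affineSubspace hne
      rw [hcardW]
      exact Nat.pow_le_pow_right (by omega) (by omega)
    have hmono : ∀ f : T, E j f → f jidx ∈ W (fun i => f i.1) := by
      intro f hEf
      have hstj : agST l1 l2 f j = f jidx := agST_lt f hjm
      have himg : agST l1 l2 f '' Set.Iio j = stP (fun i => f i.1) '' Set.Iio j := by
        apply Set.image_congr
        intro i hi
        rw [Set.mem_Iio] at hi
        have him : i < l1 + 1 + (l2 + 1) := by omega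
        have hne2 : finSumFinEquiv.symm (⟨i, him⟩ : Fin (l1 + 1 + (l2 + 1))) ≠ jidx := by
          rw [hjidx]
          intro hcon
          have h' := finSumFinEquiv.symm.injective hcon
          have h'' : i = j := congrArg Fin.val h'
          omega
        rw [agST_lt f him]
        simp only [hstP]
        rw [dif_pos him, dif_neg hne2]
      have hEf' : agST l1 l2 f j ∈
          u ⊔ affineSpan F (agST l1 l2 f '' Set.Iio j) := hEf
      rw [hstj, himg] at hEf'
      exact hEf'
    calc Nat.card {f : T // E j f}
        ≤ Nat.card {f : T // f jidx ∈ W (fun i => f i.1)} :=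
          natCard_subtype_mono _ _ hmono
      _ ≤ q ^ (l3 + j) * Nat.card ({i : Fin (l1 + 1) ⊕ Fin (l2 + 1) // i ≠ jidx} → V) :=
          natCard_pinned_le jidx W _ hWcard
      _ = q ^ (l3 + j) * q ^ (n * (m - 1)) := by
          congr 1
          have hsub : Fintype.card {i : Fin (l1 + 1) ⊕ Fin (l2 + 1) // i ≠ jidx} = m - 1 := by
            have h0 : Fintype.card {i : Fin (l1 + 1) ⊕ Fin (l2 + 1) // i ≠ jidx}
                = Fintype.card {x : Fin (l1 + 1) ⊕ Fin (l2 + 1) // ¬ x = jidx} :=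
              Fintype.card_congr (Equiv.subtypeEquivRight fun _ => Iff.rfl)
            rw [h0, Fintype.card_subtype_compl, Fintype.card_subtype_eq, Fintype.card_sum,
              Fintype.card_fin, Fintype.card_fin]
          rw [Nat.card_eq_fintype_card, Fintype.card_fun, hsub, ← Nat.card_eq_fintype_card,
            hcard, ← pow_mul]
  -- total bad count
  have hBad : Nat.card {f : T // ¬ Good f} ≤ 2 * q ^ (l3 + (m - 1) + n * (m - 1)) := by
    have h1 : Nat.card {f : T // ¬ Good f} ≤ Nat.card {f : T // ∃ j, j < m ∧ E j f} := by
      refine natCard_subtype_mono _ _ (fun f hf => ?_)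
      by_contra hcon
      push_neg at hcon
      exact hf (fun j hj => hcon j hj)
    have h2 : Nat.card {f : T // ∃ j, j < m ∧ E j f} ≤
        ∑ j ∈ Finset.range m, Nat.card {f : T // E j f} := by
      have := natCard_exists_lt_le (α := T) m E
      exact this
    have h3 : ∑ j ∈ Finset.range m, Nat.card {f : T // E j f} ≤
        ∑ j ∈ Finset.range m, q ^ (l3 + j) * q ^ (n * (m - 1)) :=
      Finset.sum_le_sum fun j hj => hEj j (Finset.mem_range.1 hj)
    have h4 : ∑ j ∈ Finset.range m, q ^ (l3 + j) * q ^ (n * (m - 1)) =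
        (q ^ l3 * q ^ (n * (m - 1))) * ∑ j ∈ Finset.range m, q ^ j := by
      rw [Finset.mul_sum]
      refine Finset.sum_congr rfl fun j _ => ?_
      rw [pow_add]
      ring
    have h5 : ∑ j ∈ Finset.range m, q ^ j ≤ 2 * q ^ (m - 1) := by
      have hg := ag_geom_le hq2 (l1 + l2 + 1)
      have hm1 : m = (l1 + l2 + 1) + 1 := by omega
      rw [hm1]
      simpa using hg
    calc Nat.card {f : T // ¬ Good f}
        ≤ (q ^ l3 * q ^ (n * (m - 1))) * ∑ j ∈ Finset.range m, q ^ j := by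
          rw [← h4]; omega
      _ ≤ (q ^ l3 * q ^ (n * (m - 1))) * (2 * q ^ (m - 1)) :=
          Nat.mul_le_mul_left _ h5
      _ = 2 * q ^ (l3 + (m - 1) + n * (m - 1)) := by
          rw [pow_add, pow_add]
          ring
  have hcompl := natCard_compl (α := T) Good
  rw [cardT] at hcompl
  -- split on whether any valid pair exists
  rcases isEmpty_or_nonempty {p // Valid p} with hemp | hpos
  · rw [Nat.card_of_isEmpty]
    push_cast
    rw [mul_zero]
    positivity
  · obtain ⟨⟨p0, hp0⟩⟩ := hpos
    set c1 := Nat.card {a : Fin (l1 + 1) → V // affineSpan F (Set.range a) = p0.1} with hc1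
    set c2 := Nat.card {b : Fin (l2 + 1) → V // affineSpan F (Set.range b) = p0.2} with hc2
    have hc1pos : 0 < c1 := by
      have hne := exists_spanning_tuple hp0.1.1 hp0.1.2
      exact Nat.card_pos
    have hc2pos : 0 < c2 := by
      have hne := exists_spanning_tuple hp0.2.1 hp0.2.2
      exact Nat.card_pos
    have hfiber : ∀ p, Valid p → Nat.card {f : T // Φ f = p} = c1 * c2 := by
      intro p hp
      have e1 : {f : T // Φ f = p} ≃
          {x : (Fin (l1 + 1) → V) × (Fin (l2 + 1) → V) //
            affineSpan F (Set.range x.1) = p.1 ∧ affineSpan F (Set.range x.2) = p.2} :=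
        (Equiv.sumArrowEquivProdArrow _ _ V).subtypeEquiv (fun f =>
          ⟨fun h => ⟨congrArg Prod.fst h, congrArg Prod.snd h⟩,
           fun h => Prod.ext h.1 h.2⟩)
      rw [Nat.card_congr (e1.trans (Equiv.subtypeProdEquivProd
          (p := fun a : Fin (l1 + 1) → V => affineSpan F (Set.range a) = p.1)
          (q := fun b : Fin (l2 + 1) → V => affineSpan F (Set.range b) = p.2))), Nat.card_prod]
      have hx1 : Nat.card {a : Fin (l1 + 1) → V // affineSpan F (Set.range a) = p.1} = c1 :=
        card_spanning_tuples_eq hp.1.1 hp0.1.1 (by rw [hp.1.2, hp0.1.2])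
      have hx2 : Nat.card {b : Fin (l2 + 1) → V // affineSpan F (Set.range b) = p.2} = c2 :=
        card_spanning_tuples_eq hp.2.1 hp0.2.1 (by rw [hp.2.2, hp0.2.2])
      rw [hx1, hx2]
    haveI : Fintype {p // Valid p} := Fintype.ofFinite _
    haveI : Fintype {p // GoodP p} := Fintype.ofFinite _
    have hN : Nat.card {f : T // Valid (Φ f)} = Nat.card {p // Valid p} * (c1 * c2) :=
      natCard_fiber_sum Φ Valid (c1 * c2) hfiber
    have hM : Nat.card {f : T // GoodP (Φ f)} = Nat.card {p // GoodP p} * (c1 * c2) :=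
      natCard_fiber_sum Φ GoodP (c1 * c2) (fun p hp => hfiber p hp.1)
    have hNle : Nat.card {f : T // Valid (Φ f)} ≤ q ^ (n * m) := by
      rw [← cardT]
      exact Nat.card_le_card_of_injective Subtype.val Subtype.val_injective
    have hMge : Nat.card {f : T // Good f} ≤ Nat.card {f : T // GoodP (Φ f)} :=
      natCard_subtype_mono _ _ claimA
    -- real arithmetic
    have hq0 : (0 : ℝ) < (q : ℝ) := by positivity
    have hqe0 : (0 : ℝ) < (q : ℝ) ^ e := by positivity
    have hεle : 2 / (q : ℝ) ^ e ≤ 1 := by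
      rw [div_le_one hqe0]
      calc (2 : ℝ) ≤ 4 := by norm_num
        _ = (2 : ℝ) ^ 2 := by norm_num
        _ ≤ (q : ℝ) ^ 2 := pow_le_pow_left₀ (by norm_num) (by exact_mod_cast hq2) 2
        _ ≤ (q : ℝ) ^ e := pow_le_pow_right₀ (by exact_mod_cast Nat.one_le_iff_ne_zero.2 (by omega)) he2
    have hCpos : (0 : ℝ) < ((c1 * c2 : ℕ) : ℝ) := by exact_mod_cast Nat.mul_pos hc1pos hc2pos
    rw [← mul_le_mul_iff_of_pos_right hCpos]
    have hNC : (Nat.card {p // Valid p} : ℝ) * ((c1 * c2 : ℕ) : ℝ) ≤ (q : ℝ) ^ (n * m) := by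
      have hh : Nat.card {p // Valid p} * (c1 * c2) ≤ q ^ (n * m) := hN ▸ hNle
      exact_mod_cast hh
    have hMC : ((q : ℝ) ^ (n * m)) - 2 * (q : ℝ) ^ (l3 + (m - 1) + n * (m - 1)) ≤
        (Nat.card {p // GoodP p} : ℝ) * ((c1 * c2 : ℕ) : ℝ) := by
      have hh : q ^ (n * m) ≤
          Nat.card {p // GoodP p} * (c1 * c2) + 2 * q ^ (l3 + (m - 1) + n * (m - 1)) := by
        have hMge' : Nat.card {f : T // Good f} ≤ Nat.card {p // GoodP p} * (c1 * c2) :=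
          hM ▸ hMge
        omega
      have hh' : ((q : ℝ) ^ (n * m)) ≤
          (Nat.card {p // GoodP p} : ℝ) * ((c1 * c2 : ℕ) : ℝ) +
            2 * (q : ℝ) ^ (l3 + (m - 1) + n * (m - 1)) := by exact_mod_cast hh
      linarith
    have hpoweq : 2 * (q : ℝ) ^ (l3 + (m - 1) + n * (m - 1)) =
        (2 / (q : ℝ) ^ e) * (q : ℝ) ^ (n * m) := by
      have hsplit : (q : ℝ) ^ (n * m) = (q : ℝ) ^ e * (q : ℝ) ^ (l3 + (m - 1) + n * (m - 1)) := by
        rw [← pow_add, hem]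
      rw [hsplit]
      field_simp
    calc (1 - 2 / (q : ℝ) ^ e) * (Nat.card {p // Valid p} : ℝ) * ((c1 * c2 : ℕ) : ℝ)
        = (1 - 2 / (q : ℝ) ^ e) * ((Nat.card {p // Valid p} : ℝ) * ((c1 * c2 : ℕ) : ℝ)) :=
          mul_assoc _ _ _
      _ ≤ (1 - 2 / (q : ℝ) ^ e) * ((q : ℝ) ^ (n * m)) :=
          mul_le_mul_of_nonneg_left hNC (by linarith)
      _ = (q : ℝ) ^ (n * m) - (2 / (q : ℝ) ^ e) * (q : ℝ) ^ (n * m) := by ring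
      _ ≤ (Nat.card {p // GoodP p} : ℝ) * ((c1 * c2 : ℕ) : ℝ) := by
          rw [← hpoweq]
          linarith
end AGmain


/-- **Complement walk counting in the affine Grassmann poset.** Over `F = F_q`, fix an
affine subspace `u ⊆ F^n` of dimension `ℓ₃` and suppose `ℓ₁ + ℓ₂ + ℓ₃ + 3 ≤ n`. Among all
pairs `(w₁, w₂)` of affine subspaces of dimensions `ℓ₁` and `ℓ₂` (chosen independently and
uniformly), the fraction with `dim(span(w₁, w₂, u)) = ℓ₁ + ℓ₂ + ℓ₃ + 2` is at least
`1 − 2/q^{n−ℓ₁−ℓ₂−ℓ₃−1}`. -/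
theorem affine_grassmann_complement_probability
    (F : Type*) [Field F] [Fintype F] (n l1 l2 l3 : ℕ)
    (hn : l1 + l2 + l3 + 3 ≤ n)
    (u : AffineSubspace F (Fin n → F))
    (hu : (u : Set (Fin n → F)).Nonempty)
    (hud : Module.finrank F u.direction = l3) :
    (1 - 2 / (Fintype.card F : ℝ) ^ (n - l1 - l2 - l3 - 1)) *
        (Nat.card {p : AffineSubspace F (Fin n → F) × AffineSubspace F (Fin n → F) //
          ((p.1 : Set (Fin n → F)).Nonempty ∧ Module.finrank F p.1.direction = l1) ∧
          ((p.2 : Set (Fin n → F)).Nonempty ∧ Module.finrank F p.2.direction = l2)} : ℝ) ≤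
      (Nat.card {p : AffineSubspace F (Fin n → F) × AffineSubspace F (Fin n → F) //
          (((p.1 : Set (Fin n → F)).Nonempty ∧ Module.finrank F p.1.direction = l1) ∧
           ((p.2 : Set (Fin n → F)).Nonempty ∧ Module.finrank F p.2.direction = l2)) ∧
          Module.finrank F
            (affineSpan F ((p.1 : Set (Fin n → F)) ∪ (p.2 : Set (Fin n → F)) ∪
              (u : Set (Fin n → F)))).direction = l1 + l2 + l3 + 2} : ℝ) := by
  have hcard : Nat.card (Fin n → F) = Fintype.card F ^ n := by
    rw [Nat.card_eq_fintype_card, Fintype.card_fun, Fintype.card_fin]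
  exact ag_main_aux F (Fin n → F) n l1 l2 l3 hn hcard u hu hud
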